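/- In the setting of the previous decomposition: if D_{σ_i} is a fundamental domain for the action of Γ_{σ_i} = G_{σ_i} ∩ Γ on G_{σ_i} (by right multiplication), then D = ⋃_{i=1}^m g_i⁻¹ D_{σ_i} is a fundamental domain for the right action of Γ on G. -/

import Mathlib

/-- In the setting of the coset decomposition `G = ⊔_i g_i⁻¹ G_{σ_i} Γ`
(with `σ₁, …, σ_m` representatives of the `Γ`-orbits inside `G·σ` and `g_i • σ = σ_i`):
if `D_{σ_i}` is a fundamental domain for the right multiplication action of
`Γ_{σ_i} = G_{σ_i} ∩ Γ` on `G_{σ_i}`, then `D = ⋃_{i=1}^m g_i⁻¹ D_{σ_i}` is a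
fundamental domain for the right multiplication action of `Γ` on `G`. -/
theorem fundamental_domain_of_stabilizer_domains
    {G : Type*} [Group G] [TopologicalSpace G] [IsTopologicalGroup G] [LocallyCompactSpace G]
    {X : Type*} [MulAction G X]
    (hproper : ∀ x : X, IsCompact ((MulAction.stabilizer G x : Set G)))
    (Γ : Subgroup G) [DiscreteTopology Γ]
    (hcocompact : ∃ K : Set G, IsCompact K ∧ ∀ g : G, ∃ k ∈ K, ∃ h ∈ Γ, g = k * h)
    (σ : X) (m : ℕ) (σi : Fin m → X) (gi : Fin m → G)
    (hgi : ∀ i, gi i • σ = σi i)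
    (hreps : ∀ x ∈ MulAction.orbit G σ, ∃! i : Fin m, ∃ h : Γ, (h : G) • σi i = x)
    (Dσ : Fin m → Set G)
    (hDσsub : ∀ i, Dσ i ⊆ (MulAction.stabilizer G (σi i) : Set G))
    -- each `Dσ i` is a fundamental domain for the right action of `Γ_{σ_i}` on `G_{σ_i}`:
    (hDσ : ∀ i, ∀ s ∈ MulAction.stabilizer G (σi i),
      ∃! d : G, d ∈ Dσ i ∧ ∃ h : G, h ∈ (MulAction.stabilizer G (σi i) : Set G) ∩ (Γ : Set G)
        ∧ s = d * h) :
    -- then `D = ⋃ i, g_i⁻¹ Dσ i` is a fundamental domain for the right action of Γ on G: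
    ∀ g : G, ∃! d : G, d ∈ (⋃ i : Fin m, (fun x => (gi i)⁻¹ * x) '' Dσ i) ∧
      ∃ h ∈ Γ, g = d * h := by
  intro g
  obtain ⟨i, ⟨h₀, hh₀⟩, huniq⟩ := hreps (g⁻¹ • σ) ⟨g⁻¹, rfl⟩
  have hs₀ : gi i * g * (h₀ : G) ∈ MulAction.stabilizer G (σi i) := by
    have : (gi i * g * (h₀ : G)) • σi i = σi i := by
      rw [mul_smul, mul_smul, hh₀, smul_inv_smul, hgi]
    exact this
  obtain ⟨d, ⟨hdD, h₁, hh₁, hsd⟩, hdu⟩ := hDσ i _ hs₀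
  refine ⟨(gi i)⁻¹ * d, ⟨Set.mem_iUnion.2 ⟨i, ⟨d, hdD, rfl⟩⟩,
    h₁ * (h₀ : G)⁻¹, mul_mem hh₁.2 (inv_mem h₀.2), ?_⟩, ?_⟩
  · have : g = (gi i)⁻¹ * (gi i * g * (h₀ : G)) * (h₀ : G)⁻¹ := by group
    rw [this, hsd]; group
  · rintro d' ⟨hd', h', hh', hg⟩
    obtain ⟨j, e, heD, heq⟩ := Set.mem_iUnion.1 hd'
    have hestab : e ∈ MulAction.stabilizer G (σi j) := hDσsub j heD
    have he : e = gi j * g * h'⁻¹ := by rw [hg, ← heq]; group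
    have hji : j = i := by
      refine huniq j ⟨⟨h'⁻¹, inv_mem hh'⟩, ?_⟩
      have h1 : (gi j * g * h'⁻¹) • σi j = σi j := by rw [← he]; exact hestab
      have h2 : (gi j)⁻¹ • σi j = σ := by rw [← hgi j, inv_smul_smul]
      calc (h'⁻¹ : G) • σi j = g⁻¹ • ((g * h'⁻¹) • σi j) := by
            rw [mul_smul, inv_smul_smul]
        _ = g⁻¹ • σ := by
            congr 1
            have := congrArg (fun y => (gi j)⁻¹ • y) h1
            simpa [mul_smul, h2] using this
    subst hji
    have hed : e = d := by
      refine hdu e ⟨heD, h' * (h₀ : G), ⟨?_, mul_mem hh' h₀.2⟩, ?_⟩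
      · have : h' * (h₀ : G) = e⁻¹ * (gi j * g * (h₀ : G)) := by rw [he]; group
        rw [SetLike.mem_coe, this]
        exact mul_mem (inv_mem hestab) hs₀
      · rw [he]; group
    rw [← heq, hed]
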